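/- For every integer t ≥ 1, there exists a graph with no K_{3t+1} minor that is not (4t-2)-choosable. -/

import Mathlib

open SimpleGraph

/-- `H` is a minor of `G`, witnessed by disjoint nonempty connected branch sets in `G`
with an edge of `G` between the branch sets of any two adjacent vertices of `H`. -/
def HasMinor {V : Type*} {W : Type*} (G : SimpleGraph V) (H : SimpleGraph W) : Prop :=
  ∃ B : W → Set V,
    (∀ w, (B w).Nonempty) ∧
    (∀ w, (G.induce (B w)).Connected) ∧
    (Pairwise fun w₁ w₂ => Disjoint (B w₁) (B w₂)) ∧
    (∀ ⦃w₁ w₂⦄, H.Adj w₁ w₂ → ∃ v₁ ∈ B w₁, ∃ v₂ ∈ B w₂, G.Adj v₁ v₂)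

/-- `G` is `k`-choosable: for every list assignment with lists of size at least `k`,
there is a proper colouring of `G` from the lists. -/
def Choosable {V : Type*} (G : SimpleGraph V) (k : ℕ) : Prop :=
  ∀ L : V → Finset ℕ, (∀ v, k ≤ (L v).card) →
    ∃ C : V → ℕ, (∀ v, C v ∈ L v) ∧ ∀ ⦃u v⦄, G.Adj u v → C u ≠ C v

/-- `G` is `d`-degenerate: every (finite) nonempty induced subgraph
has a vertex of degree at most `d`. -/
def Degenerate {V : Type*} (G : SimpleGraph V) (d : ℕ) : Prop :=
  ∀ s : Finset V, s.Nonempty → ∃ v ∈ s, ({u ∈ (s : Set V) | G.Adj v u}).ncard ≤ d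

/-- The complete multipartite graph `K_{r×2}`: `r` parts each of size two,
i.e. `K_{2r}` minus a perfect matching. `v_i = (i,0)` and `w_i = (i,1)`. -/
def Krx2 (r : ℕ) : SimpleGraph (Fin r × Fin 2) :=
  SimpleGraph.fromRel (fun a b => a.1 ≠ b.1)

namespace BJWaux

/-- Index type for the copies: a copy for each "transversal function". -/
abbrev Cop (t : ℕ) : Type := Fin (2 * t) → Fin (4 * t - 2)

/-- Vertices: the spine `q i` (left) and, for each copy `τ`, private vertices `p τ i`. -/
abbrev Vt (t : ℕ) : Type := Fin (2 * t) ⊕ (Cop t × Fin (2 * t))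

/-- The part of a vertex. -/
def pt {t : ℕ} : Vt t → Fin (2 * t) := Sum.elim id Prod.snd

/-- The copy of a vertex (`none` for spine vertices). -/
def cp {t : ℕ} : Vt t → Option (Cop t) := Sum.elim (fun _ => none) (fun x => some x.1)

/-- The BJW graph: copies of `K_{(2t)×2}` glued along a common transversal clique. -/
def Gt (t : ℕ) : SimpleGraph (Vt t) where
  Adj u v := pt u ≠ pt v ∧ (cp u = none ∨ cp v = none ∨ cp u = cp v)
  symm := by
    constructor; rintro u v ⟨h1, h2⟩
    refine ⟨h1.symm, ?_⟩
    rcases h2 with h | h | h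
    · exact Or.inr (Or.inl h)
    · exact Or.inl h
    · exact Or.inr (Or.inr h.symm)
  loopless := by constructor; rintro u ⟨h1, -⟩; exact h1 rfl

lemma adj_qq {t : ℕ} {i j : Fin (2 * t)} :
    (Gt t).Adj (Sum.inl i) (Sum.inl j) ↔ i ≠ j := by
  simp [Gt, pt, cp]

lemma adj_qp {t : ℕ} {i j : Fin (2 * t)} {τ : Cop t} :
    (Gt t).Adj (Sum.inl i) (Sum.inr (τ, j)) ↔ i ≠ j := by
  simp [Gt, pt, cp]

lemma adj_pq {t : ℕ} {i j : Fin (2 * t)} {τ : Cop t} :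
    (Gt t).Adj (Sum.inr (τ, i)) (Sum.inl j) ↔ i ≠ j := by
  simp [Gt, pt, cp]

lemma adj_pp {t : ℕ} {i j : Fin (2 * t)} {τ σ : Cop t} :
    (Gt t).Adj (Sum.inr (τ, i)) (Sum.inr (σ, j)) ↔ i ≠ j ∧ τ = σ := by
  simp [Gt, pt, cp]

/-! ### The list assignment -/

/-- The block decoding lemma. -/
lemma decode {k j j' a a' : ℕ} (ha : a < k) (ha' : a' < k)
    (h : j * k + a = j' * k + a') : j = j' ∧ a = a' := by
  have hk : 0 < k := lt_of_le_of_lt (Nat.zero_le a) ha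
  have h1 : a + j * k = a' + j' * k := by
    calc a + j * k = j * k + a := Nat.add_comm _ _
    _ = j' * k + a' := h
    _ = a' + j' * k := Nat.add_comm _ _
  have d1 := congrArg (· / k) h1
  simp only [Nat.add_mul_div_right _ _ hk, Nat.div_eq_of_lt ha, Nat.div_eq_of_lt ha',
    Nat.zero_add] at d1
  subst d1
  exact ⟨rfl, Nat.add_right_cancel h1⟩

/-- Lists for the spine: pairwise disjoint blocks. -/
def qls (t : ℕ) (i : Fin (2 * t)) : Finset ℕ :=
  Finset.univ.image (fun a : Fin (4 * t - 2) => i.val * (4 * t - 2) + a.val)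

/-- The fresh colours, shared by all copies. -/
def fr (t : ℕ) : Finset ℕ :=
  (Finset.range (2 * t - 1)).image (fun a => 2 * t * (4 * t - 2) + a)

/-- Lists for the private vertices. -/
def pls (t : ℕ) (τ : Cop t) (i : Fin (2 * t)) : Finset ℕ :=
  ((Finset.univ.erase i).image
      (fun j : Fin (2 * t) => j.val * (4 * t - 2) + (τ j).val)) ∪ fr t

def Lt (t : ℕ) : Vt t → Finset ℕ :=
  Sum.elim (qls t) (fun x => pls t x.1 x.2)

lemma fr_card (t : ℕ) : (fr t).card = 2 * t - 1 := by
  rw [fr, Finset.card_image_of_injective _ (fun a b h => by omega), Finset.card_range]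

lemma qc_lt_base {t : ℕ} (j : Fin (2 * t)) (a : Fin (4 * t - 2)) :
    j.val * (4 * t - 2) + a.val < 2 * t * (4 * t - 2) := by
  have h1 : j.val * (4 * t - 2) + a.val < (j.val + 1) * (4 * t - 2) := by
    have := a.isLt
    rw [add_mul, one_mul]
    omega
  have h2 : (j.val + 1) * (4 * t - 2) ≤ 2 * t * (4 * t - 2) :=
    Nat.mul_le_mul_right _ j.isLt
  omega

lemma Lt_card (t : ℕ) (ht : 1 ≤ t) : ∀ v : Vt t, 4 * t - 2 ≤ (Lt t v).card := by
  rintro (i | ⟨τ, i⟩)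
  · have : (qls t i).card = 4 * t - 2 := by
      rw [qls, Finset.card_image_of_injective, Finset.card_univ, Fintype.card_fin]
      intro a b h
      have h' : i.val * (4 * t - 2) + a.val = i.val * (4 * t - 2) + b.val := h
      exact Fin.ext (Nat.add_left_cancel h')
    simp [Lt, this]
  · have hcard1 : ((Finset.univ.erase i).image
        (fun j : Fin (2 * t) => j.val * (4 * t - 2) + (τ j).val)).card = 2 * t - 1 := by
      rw [Finset.card_image_of_injOn, Finset.card_erase_of_mem (Finset.mem_univ i),
        Finset.card_univ, Fintype.card_fin]
      intro a _ b _ h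
      exact Fin.ext (decode (τ a).isLt (τ b).isLt h).1
    have hdisj : Disjoint ((Finset.univ.erase i).image
        (fun j : Fin (2 * t) => j.val * (4 * t - 2) + (τ j).val)) (fr t) := by
      rw [Finset.disjoint_left]
      intro x hx hx'
      obtain ⟨j, -, rfl⟩ := Finset.mem_image.mp hx
      obtain ⟨a, -, ha⟩ := Finset.mem_image.mp hx'
      have := qc_lt_base j (τ j)
      omega
    have : (Lt t (Sum.inr (τ, i))).card = (2 * t - 1) + (2 * t - 1) := by
      rw [Lt, Sum.elim_inr, pls, Finset.card_union_of_disjoint hdisj, hcard1, fr_card]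
    omega

/-! ### Non-choosability -/

theorem not_choosable (t : ℕ) (ht : 1 ≤ t) : ¬ Choosable (Gt t) (4 * t - 2) := by
  intro h
  obtain ⟨C, hC, hprop⟩ := h (Lt t) (Lt_card t ht)
  -- extract the transversal chosen on the spine
  have hq : ∀ i : Fin (2 * t), ∃ a : Fin (4 * t - 2),
      i.val * (4 * t - 2) + a.val = C (Sum.inl i) := by
    intro i
    have := hC (Sum.inl i)
    simp only [Lt, Sum.elim_inl, qls, Finset.mem_image, Finset.mem_univ, true_and] at this
    exact this
  choose τ hτ using hq
  -- in the corresponding copy, all private vertices are coloured with fresh colours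
  have hpF : ∀ i : Fin (2 * t), C (Sum.inr (τ, i)) ∈ fr t := by
    intro i
    have hmem := hC (Sum.inr (τ, i))
    simp only [Lt, Sum.elim_inr, pls] at hmem
    rcases Finset.mem_union.mp hmem with hin | hin
    · exfalso
      obtain ⟨j, hj, hje⟩ := Finset.mem_image.mp hin
      have hji : j ≠ i := (Finset.mem_erase.mp hj).1
      have hadj : (Gt t).Adj (Sum.inr (τ, i)) (Sum.inl j) := adj_pq.mpr (fun e => hji e.symm)
      exact hprop hadj (hje.symm.trans (hτ j))
    · exact hin
  -- pigeonhole: 2t pairwise adjacent private vertices, 2t-1 fresh colours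
  have hinj : Function.Injective (fun i : Fin (2 * t) => C (Sum.inr (τ, i))) := by
    intro i j hij
    by_contra hne
    exact hprop (adj_pp.mpr ⟨hne, rfl⟩) hij
  have hsub : Finset.univ.image (fun i : Fin (2 * t) => C (Sum.inr (τ, i))) ⊆ fr t := by
    intro x hx
    obtain ⟨i, -, rfl⟩ := Finset.mem_image.mp hx
    exact hpF i
  have h1 := Finset.card_le_card hsub
  rw [Finset.card_image_of_injective _ hinj, Finset.card_univ, Fintype.card_fin, fr_card] at h1
  omega

/-! ### No `K_{3t+1}` minor -/

lemma walk_const {V' : Type*} {H : SimpleGraph V'} {α : Type*} (f : V' → α)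
    (hf : ∀ a b : V', H.Adj a b → f a = f b) {u v : V'} (p : H.Walk u v) : f u = f v := by
  induction p with
  | nil => rfl
  | cons h q ih => exact (hf _ _ h).trans ih

theorem no_minor (t : ℕ) (ht : 1 ≤ t) :
    ¬ HasMinor (Gt t) (completeGraph (Fin (3 * t + 1))) := by
  classical
  rintro ⟨B, hne, hconn, hdisj, hadj⟩
  -- branch sets avoiding the spine have a constant copy
  have samecopy : ∀ w : Fin (3 * t + 1), (∀ i, (Sum.inl i : Vt t) ∉ B w) →
      ∀ u ∈ B w, ∀ v ∈ B w, cp u = cp v := by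
    intro w hav u hu v hv
    have hr := (hconn w).preconnected ⟨u, hu⟩ ⟨v, hv⟩
    obtain ⟨p⟩ := hr
    exact walk_const (fun z : ↥(B w) => cp z.val)
      (by
        rintro ⟨a, ha⟩ ⟨b, hb⟩ hab
        have hab' : (Gt t).Adj a b := hab
        rcases hab' with ⟨-, h2⟩
        rcases a with i | ⟨σa, ja⟩
        · exact absurd ha (hav i)
        rcases b with i | ⟨σb, jb⟩
        · exact absurd hb (hav i)
        rcases h2 with h | h | h
        · exact absurd h (by simp [cp])
        · exact absurd h (by simp [cp])
        · exact h) p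
  -- the adjacency of the complete graph
  have hedge : ∀ {w w' : Fin (3 * t + 1)}, w ≠ w' →
      ∃ v₁ ∈ B w, ∃ v₂ ∈ B w', (Gt t).Adj v₁ v₂ := by
    intro w w' hww
    exact hadj (by simpa [completeGraph] using hww)
  by_cases hall : ∀ w : Fin (3 * t + 1), ∃ i, (Sum.inl i : Vt t) ∈ B w
  · -- every branch set meets the spine: at most 2t branch sets
    choose qi hqi using hall
    have hinj : Function.Injective qi := by
      intro w w' h
      by_contra hne
      exact Set.disjoint_left.mp (hdisj hne) (hqi w) (h ▸ hqi w')
    have := Fintype.card_le_of_injective qi hinj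
    simp only [Fintype.card_fin] at this
    omega
  · push_neg at hall
    obtain ⟨w₁, hav₁⟩ := hall
    obtain ⟨u₀, hu₀⟩ := hne w₁
    rcases u₀ with i | ⟨τ₀, i₀⟩
    · exact absurd hu₀ (hav₁ i)
    -- all spine-avoiding branch sets live in the copy τ₀
    have hcopyAll : ∀ w : Fin (3 * t + 1), (∀ i, (Sum.inl i : Vt t) ∉ B w) →
        ∀ v ∈ B w, cp v = some τ₀ := by
      intro w hav v hv
      by_cases hw : w = w₁
      · subst hw
        have := samecopy w hav v hv _ hu₀
        simpa [cp] using this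
      · obtain ⟨x, hx, y, hy, hxy⟩ := hedge hw
        have hyc : cp y = some τ₀ := by
          have := samecopy w₁ hav₁ y hy _ hu₀
          simpa [cp] using this
        have hxc : cp x = some τ₀ := by
          rcases x with i | ⟨σ, j⟩
          · exact absurd hx (hav i)
          rcases y with i | ⟨σ', j'⟩
          · exact absurd hy (hav₁ i)
          have : σ = σ' := (adj_pp.mp hxy).2
          simp only [cp, Sum.elim_inr] at hyc ⊢
          rw [this, hyc]
        have := samecopy w hav v hv x hx
        rw [this, hxc]
    -- tokens
    set tok : Fin (3 * t + 1) → Finset (Fin (2 * t) ⊕ Fin (2 * t)) := fun w =>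
      (Finset.univ.filter (fun i => (Sum.inl i : Vt t) ∈ B w)).image Sum.inl ∪
      (Finset.univ.filter (fun i => (Sum.inr (τ₀, i) : Vt t) ∈ B w)).image Sum.inr
      with htokdef
    have mem_tok_inl : ∀ {w : Fin (3 * t + 1)} {i : Fin (2 * t)},
        (Sum.inl i : Fin (2 * t) ⊕ Fin (2 * t)) ∈ tok w ↔ (Sum.inl i : Vt t) ∈ B w := by
      intro w i
      simp [htokdef]
    have mem_tok_inr : ∀ {w : Fin (3 * t + 1)} {i : Fin (2 * t)},
        (Sum.inr i : Fin (2 * t) ⊕ Fin (2 * t)) ∈ tok w ↔ (Sum.inr (τ₀, i) : Vt t) ∈ B w := by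
      intro w i
      simp [htokdef]
    -- tokens of distinct branch sets are disjoint
    have tdisj : ∀ w w' : Fin (3 * t + 1), w ≠ w' → Disjoint (tok w) (tok w') := by
      intro w w' hww
      rw [Finset.disjoint_left]
      rintro (i | i) h1 h2
      · exact Set.disjoint_left.mp (hdisj hww) (mem_tok_inl.mp h1) (mem_tok_inl.mp h2)
      · exact Set.disjoint_left.mp (hdisj hww) (mem_tok_inr.mp h1) (mem_tok_inr.mp h2)
    -- each branch set has a token
    have tpos : ∀ w : Fin (3 * t + 1), 1 ≤ (tok w).card := by
      intro w
      refine Finset.card_pos.mpr ?_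
      by_cases hm : ∃ i, (Sum.inl i : Vt t) ∈ B w
      · obtain ⟨i, hi⟩ := hm
        exact ⟨Sum.inl i, mem_tok_inl.mpr hi⟩
      · push_neg at hm
        obtain ⟨v, hv⟩ := hne w
        rcases v with i | ⟨σ, j⟩
        · exact absurd hv (hm i)
        · have hc := hcopyAll w hm _ hv
          simp only [cp, Sum.elim_inr, Option.some.injEq] at hc
          subst hc
          exact ⟨Sum.inr j, mem_tok_inr.mpr hv⟩
    -- total number of tokens is at most 4t
    have hsum : ∑ w : Fin (3 * t + 1), (tok w).card ≤ 4 * t := by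
      have hb := Finset.card_biUnion (s := (Finset.univ : Finset (Fin (3 * t + 1))))
        (t := tok) (fun x _ y _ hxy => tdisj x y hxy)
      calc ∑ w : Fin (3 * t + 1), (tok w).card
          = (Finset.univ.biUnion tok).card := hb.symm
        _ ≤ (Finset.univ : Finset (Fin (2 * t) ⊕ Fin (2 * t))).card := Finset.card_le_univ _
        _ = 4 * t := by
            simp only [Finset.card_univ, Fintype.card_sum, Fintype.card_fin]
            omega
    -- at least 2t+2 branch sets have exactly one token
    set singles := Finset.univ.filter (fun w : Fin (3 * t + 1) => (tok w).card = 1)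
      with hsdef
    have hineq : 2 * (3 * t + 1) ≤ 4 * t + singles.card := by
      have key : ∀ w : Fin (3 * t + 1),
          2 ≤ (tok w).card + (if (tok w).card = 1 then 1 else 0) := by
        intro w
        have h1 := tpos w
        by_cases h2 : (tok w).card = 1
        · simp [h2]
        · simp only [h2, if_false]
          omega
      calc 2 * (3 * t + 1) = ∑ _w : Fin (3 * t + 1), 2 := by
            simp [Finset.sum_const, Finset.card_univ]
            omega
        _ ≤ ∑ w : Fin (3 * t + 1), ((tok w).card + if (tok w).card = 1 then 1 else 0) :=
            Finset.sum_le_sum (fun w _ => key w)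
        _ = (∑ w : Fin (3 * t + 1), (tok w).card)
              + (∑ w : Fin (3 * t + 1), if (tok w).card = 1 then 1 else 0) :=
            Finset.sum_add_distrib
        _ = (∑ w : Fin (3 * t + 1), (tok w).card) + singles.card := by
            rw [Finset.sum_boole]
            simp [hsdef]
        _ ≤ 4 * t + singles.card := Nat.add_le_add_right hsum _
    have hsingles_big : 2 * t + 2 ≤ singles.card := by omega
    -- the forbidden configuration: a set owning only q_l and a set equal to {p^{τ₀}_l}
    have forb : ∀ w w' : Fin (3 * t + 1), w ≠ w' → ∀ l : Fin (2 * t),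
        tok w = {Sum.inl l} → tok w' = {Sum.inr l} → False := by
      intro w w' hww l hw hw'
      have hA2 : ∀ j, (Sum.inr (τ₀, j) : Vt t) ∉ B w := by
        intro j hj
        have hmem := mem_tok_inr.mpr hj
        rw [hw] at hmem
        exact absurd (Finset.mem_singleton.mp hmem) (by simp)
      have hA3 : ∀ i, (Sum.inl i : Vt t) ∈ B w → i = l := by
        intro i hi
        have hmem := mem_tok_inl.mpr hi
        rw [hw] at hmem
        simpa using Finset.mem_singleton.mp hmem
      have hB2 : ∀ i, (Sum.inl i : Vt t) ∉ B w' := by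
        intro i hi
        have hmem := mem_tok_inl.mpr hi
        rw [hw'] at hmem
        exact absurd (Finset.mem_singleton.mp hmem) (by simp)
      have hB3 : ∀ v ∈ B w', v = (Sum.inr (τ₀, l) : Vt t) := by
        intro v hv
        rcases v with i | ⟨σ, j⟩
        · exact absurd hv (hB2 i)
        · have hc := hcopyAll w' hB2 _ hv
          simp only [cp, Sum.elim_inr, Option.some.injEq] at hc
          subst hc
          have hmem := mem_tok_inr.mpr hv
          rw [hw'] at hmem
          have hj := Finset.mem_singleton.mp hmem
          simp only [Sum.inr.injEq] at hj
          rw [hj]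
      obtain ⟨x, hx, y, hy, hxy⟩ := hedge hww
      have hy' := hB3 y hy
      subst hy'
      rcases x with i | ⟨σ, j⟩
      · have hi := hA3 i hx
        subst hi
        exact absurd (adj_qp.mp hxy) (by simp)
      · have hσ := (adj_pp.mp hxy).2
        subst hσ
        exact hA2 j hx
    -- the map sending a single-token set to the part of its token
    have hzero : (0 : ℕ) < 2 * t := by omega
    set g : Fin (3 * t + 1) → Fin (2 * t) := fun w =>
      if h : (tok w).Nonempty then Sum.elim id id h.choose else ⟨0, hzero⟩ with hgdef
    have gval : ∀ (w : Fin (3 * t + 1)) (e : Fin (2 * t) ⊕ Fin (2 * t)),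
        tok w = {e} → g w = Sum.elim id id e := by
      intro w e he
      have hnon : (tok w).Nonempty := ⟨e, by rw [he]; exact Finset.mem_singleton_self e⟩
      have hall : ∀ x ∈ tok w, x = e := by
        intro x hx
        rw [he] at hx
        exact Finset.mem_singleton.mp hx
      have hxe := hall _ hnon.choose_spec
      rw [hgdef]
      simp only [dif_pos hnon]
      rw [hxe]
    have hginj : Set.InjOn g (singles : Set (Fin (3 * t + 1))) := by
      intro w hw w' hw' hg
      by_contra hne'
      have hw1 : (tok w).card = 1 := by
        have := Finset.mem_coe.mp hw
        rw [hsdef] at this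
        exact (Finset.mem_filter.mp this).2
      have hw'1 : (tok w').card = 1 := by
        have := Finset.mem_coe.mp hw'
        rw [hsdef] at this
        exact (Finset.mem_filter.mp this).2
      obtain ⟨e, he⟩ := Finset.card_eq_one.mp hw1
      obtain ⟨e', he'⟩ := Finset.card_eq_one.mp hw'1
      rw [gval w e he, gval w' e' he'] at hg
      have hme : e ∈ tok w := he ▸ Finset.mem_singleton_self e
      have hme' : e' ∈ tok w' := he' ▸ Finset.mem_singleton_self e'
      rcases e with l | l <;> rcases e' with l' | l' <;>
        simp only [Sum.elim_inl, Sum.elim_inr, id_eq] at hg <;> subst hg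
      · exact Set.disjoint_left.mp (hdisj hne') (mem_tok_inl.mp hme) (mem_tok_inl.mp hme')
      · exact forb w w' hne' l he he'
      · exact forb w' w (Ne.symm hne') l he' he
      · exact Set.disjoint_left.mp (hdisj hne') (mem_tok_inr.mp hme) (mem_tok_inr.mp hme')
    have hcard := Finset.card_le_card_of_injOn g
      (fun a _ => Finset.mem_univ (g a)) hginj
    rw [Finset.card_univ, Fintype.card_fin] at hcard
    omega

end BJWaux

/-- For every $t ≥ 1$ there is a $K_{3t+1}$-minor-free graph that is not $(4t-2)$-choosable. -/
theorem main_b (t : ℕ) (ht : 1 ≤ t) :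
    ∃ (V : Type) (_ : Fintype V) (G : SimpleGraph V),
      ¬ HasMinor G (completeGraph (Fin (3 * t + 1))) ∧ ¬ Choosable G (4 * t - 2) := by
  exact ⟨BJWaux.Vt t, inferInstance, BJWaux.Gt t, BJWaux.no_minor t ht, BJWaux.not_choosable t ht⟩
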